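/- Let T > 0, ρ ∈ (0,1), q ∈ (1/ρ, ∞], and let g ∈ L^q(0,T;ℝ) with g(t) ≥ 0 for almost every t ∈ [0,T]. Define the iterated functions F₁(t) := J^ρ g(t) and F_{k+1}(t) := J^ρ (g · F_k)(t) = (1/Γ(ρ)) ∫₀ᵗ (t−s)^{ρ−1} g(s) F_k(s) ds for k ≥ 1. Then there exists n₀ ∈ ℕ such that F_{n₀}(t) < 1 for every t ∈ [0,T]. -/

import Mathlib

open MeasureTheory Real Set ENNReal

open Filter Topology

/-- Beta-type integrand is interval integrable on `[0,1]`. -/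
lemma betaAux_intervalIntegrable {A B : ℝ} (hA : -1 < A) (hB : -1 < B) :
    IntervalIntegrable (fun u : ℝ => u ^ A * (1 - u) ^ B) volume 0 1 := by
  have h1 : IntervalIntegrable (fun u : ℝ => u ^ A * (1 - u) ^ B) volume 0 (1/2) := by
    apply (intervalIntegral.intervalIntegrable_rpow' hA).mul_continuousOn
    apply ContinuousOn.rpow_const
    · exact (continuous_const.sub continuous_id).continuousOn
    · intro x hx
      left
      rw [uIcc_of_le (by norm_num)] at hx
      have := hx.2
      intro h
      nlinarith [hx.2]
  have h2 : IntervalIntegrable (fun u : ℝ => u ^ A * (1 - u) ^ B) volume (1/2) 1 := by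
    have hb : IntervalIntegrable (fun u : ℝ => (1 - u) ^ B) volume (1/2) 1 := by
      have := (intervalIntegral.intervalIntegrable_rpow' (a := 0) (b := 1/2) hB).comp_sub_left 1
      norm_num at this
      exact this.symm
    apply hb.continuousOn_mul
    apply ContinuousOn.rpow_const
    · exact continuous_id.continuousOn
    · intro x hx
      left
      rw [uIcc_of_le (by norm_num)] at hx
      nlinarith [hx.1]
  exact h1.trans h2

/-- Scaled beta integrand is interval integrable on `[0,t]`. -/
lemma betaAux_intervalIntegrable_scaled {A B t : ℝ} (hA : -1 < A) (hB : -1 < B) (ht : 0 < t) :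
    IntervalIntegrable (fun s : ℝ => s ^ A * (t - s) ^ B) volume 0 t := by
  have h0 := (betaAux_intervalIntegrable hA hB).comp_mul_left (c := t⁻¹)
  have h1 : IntervalIntegrable (fun s : ℝ => (t⁻¹ * s) ^ A * (1 - t⁻¹ * s) ^ B) volume 0 t := by
    simpa [one_div, inv_inv] using h0
  apply (h1.const_mul (t ^ A * t ^ B)).congr (g := fun s : ℝ => s ^ A * (t - s) ^ B)
  · intro s hs
    rw [Set.uIoc_of_le ht.le] at hs
    have hs0 : 0 < s := hs.1
    have hst : s ≤ t := hs.2
    have e1 : (t⁻¹ * s) ^ A = t⁻¹ ^ A * s ^ A :=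
      Real.mul_rpow (by positivity) hs0.le
    have e2 : (1 - t⁻¹ * s) ^ B = t⁻¹ ^ B * (t - s) ^ B := by
      have : (1 - t⁻¹ * s) = t⁻¹ * (t - s) := by field_simp
      rw [this, Real.mul_rpow (by positivity) (by linarith)]
    have e3 : t ^ A * t⁻¹ ^ A = 1 := by
      rw [← Real.mul_rpow ht.le (by positivity), mul_inv_cancel₀ ht.ne', Real.one_rpow]
    have e4 : t ^ B * t⁻¹ ^ B = 1 := by
      rw [← Real.mul_rpow ht.le (by positivity), mul_inv_cancel₀ ht.ne', Real.one_rpow]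
    simp only []
    rw [e1, e2]
    calc t ^ A * t ^ B * (t⁻¹ ^ A * s ^ A * (t⁻¹ ^ B * (t - s) ^ B))
        = (t ^ A * t⁻¹ ^ A) * (t ^ B * t⁻¹ ^ B) * (s ^ A * (t - s) ^ B) := by ring
      _ = s ^ A * (t - s) ^ B := by rw [e3, e4]; ring

/-- Scaling identity for beta-type integrals. -/
lemma betaAux_scaling {A B t : ℝ} (ht : 0 < t) :
    ∫ s in (0:ℝ)..t, s ^ A * (t - s) ^ B
      = t ^ (A + B + 1) * ∫ u in (0:ℝ)..1, u ^ A * (1 - u) ^ B := by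
  have h0 := intervalIntegral.integral_comp_mul_left
    (f := fun s : ℝ => s ^ A * (t - s) ^ B) (a := 0) (b := 1) ht.ne'
  have h1 : (∫ x in (0:ℝ)..1, (t * x) ^ A * (t - t * x) ^ B)
      = t ^ (A + B) * ∫ u in (0:ℝ)..1, u ^ A * (1 - u) ^ B := by
    rw [← intervalIntegral.integral_const_mul]
    apply intervalIntegral.integral_congr
    intro x hx
    rw [Set.uIcc_of_le (by norm_num)] at hx
    have hx0 : 0 ≤ x := hx.1
    have hx1 : x ≤ 1 := hx.2
    have e1 : (t * x) ^ A = t ^ A * x ^ A := Real.mul_rpow ht.le hx0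
    have e2 : (t - t * x) ^ B = t ^ B * (1 - x) ^ B := by
      have : t - t * x = t * (1 - x) := by ring
      rw [this, Real.mul_rpow ht.le (by linarith)]
    simp only []
    rw [e1, e2, Real.rpow_add ht]
    ring
  rw [h1] at h0
  rw [mul_zero, mul_one] at h0
  have := congrArg (fun x => t * x) h0
  simp only [smul_eq_mul, ← mul_assoc, mul_inv_cancel₀ ht.ne', one_mul] at this
  have e : t ^ (A + B + 1) = t ^ (A + B) * t := by
    rw [Real.rpow_add ht, Real.rpow_one]
  rw [← this, e]
  ring

/-- The beta-type integrals tend to zero as the left exponent grows. -/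
lemma betaAux_tendsto_zero {B m : ℝ} (hB : -1 < B) (hm : 0 < m) :
    Tendsto (fun k : ℕ => ∫ u in (0:ℝ)..1, u ^ ((k : ℝ) * m) * (1 - u) ^ B)
      atTop (𝓝 0) := by
  have hrw : ∀ k : ℕ, (∫ u in (0:ℝ)..1, u ^ ((k : ℝ) * m) * (1 - u) ^ B)
      = ∫ u in Ioc (0:ℝ) 1, u ^ ((k : ℝ) * m) * (1 - u) ^ B := fun k =>
    intervalIntegral.integral_of_le zero_le_one
  simp only [hrw]
  have H : Tendsto (fun k : ℕ => ∫ u in Ioc (0:ℝ) 1, u ^ ((k : ℝ) * m) * (1 - u) ^ B)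
      atTop (𝓝 (∫ _ in Ioc (0:ℝ) 1, (0:ℝ))) := by
    apply MeasureTheory.tendsto_integral_of_dominated_convergence
      (fun u : ℝ => (1 - u) ^ B)
    · intro n
      apply Measurable.aestronglyMeasurable
      fun_prop
    · have hb : IntervalIntegrable (fun u : ℝ => (1 - u) ^ B) volume 0 1 := by
        have := (intervalIntegral.intervalIntegrable_rpow' (a := 0) (b := 1) hB).comp_sub_left 1
        norm_num at this
        exact this.symm
      rw [intervalIntegrable_iff_integrableOn_Ioc_of_le zero_le_one] at hb
      exact hb
    · intro n
      filter_upwards [ae_restrict_mem measurableSet_Ioc] with u hu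
      have hu0 : 0 < u := hu.1
      have hu1 : u ≤ 1 := hu.2
      have h1 : u ^ ((n : ℝ) * m) ≤ 1 :=
        Real.rpow_le_one hu0.le hu1 (by positivity)
      have h2 : 0 ≤ (1 - u) ^ B := Real.rpow_nonneg (by linarith) B
      rw [Real.norm_eq_abs, abs_mul, abs_of_nonneg (Real.rpow_nonneg hu0.le _), abs_of_nonneg h2]
      calc u ^ ((n : ℝ) * m) * (1 - u) ^ B ≤ 1 * (1 - u) ^ B := by
            exact mul_le_mul_of_nonneg_right h1 h2
        _ = (1 - u) ^ B := one_mul _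
    · have hne : ∀ᵐ u ∂(volume.restrict (Ioc (0:ℝ) 1)), u ≠ 1 := by
        apply ae_restrict_of_ae
        have : (volume : Measure ℝ) {u : ℝ | ¬ u ≠ 1} = 0 := by
          simp only [ne_eq, not_not, setOf_eq_eq_singleton]
          exact measure_singleton 1
        exact this
      filter_upwards [ae_restrict_mem measurableSet_Ioc, hne] with u hu hune
      have hu0 : 0 < u := hu.1
      have hu1 : u < 1 := lt_of_le_of_ne hu.2 hune
      have key : ∀ n : ℕ, u ^ ((n : ℝ) * m) = (u ^ m) ^ n := by
        intro n
        rw [mul_comm, Real.rpow_mul hu0.le, Real.rpow_natCast]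
      simp only [key]
      have := (tendsto_pow_atTop_nhds_zero_of_lt_one (Real.rpow_nonneg hu0.le m)
        (Real.rpow_lt_one hu0.le hu1 hm)).mul_const ((1 - u) ^ B)
      simpa using this
  simpa using H

/-- The Riemann–Liouville fractional integral of order `α`:
`J^α g (t) = (1/Γ(α)) ∫₀ᵗ (t-s)^(α-1) g(s) ds`. -/
noncomputable def rlInt {E : Type*} [NormedAddCommGroup E] [NormedSpace ℝ E]
    (α : ℝ) (g : ℝ → E) (t : ℝ) : E :=
  (Real.Gamma α)⁻¹ • ∫ s in (0:ℝ)..t, (t - s) ^ (α - 1) • g s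

/-- The iterated Riemann–Liouville integrals: `iterJ ρ g 1 = J^ρ g` and
`iterJ ρ g (k+1) = J^ρ (g · iterJ ρ g k)`. -/
noncomputable def iterJ (ρ : ℝ) (g : ℝ → ℝ) : ℕ → ℝ → ℝ
  | 0 => fun _ => 1
  | k + 1 => fun t => rlInt ρ (fun s => g s * iterJ ρ g k s) t

set_option maxHeartbeats 1000000 in
/-- For `ρ ∈ (0,1)`, `q ∈ (1/ρ, ∞]` and `0 ≤ g ∈ L^q(0,T)`, some iterate
`J^ρ(g J^ρ(g ⋯ J^ρ g))` is everywhere smaller than `1` on `[0,T]`. -/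
theorem iterated_rlInt_lt_one
    (T : ℝ) (hT : 0 < T) (ρ : ℝ) (hρ : ρ ∈ Ioo (0:ℝ) 1)
    (q : ℝ≥0∞) (hq : ENNReal.ofReal (1 / ρ) < q)
    (g : ℝ → ℝ) (hg : MemLp g q (volume.restrict (Icc (0:ℝ) T)))
    (hg0 : ∀ᵐ t ∂(volume.restrict (Icc (0:ℝ) T)), 0 ≤ g t) :
    ∃ n₀ : ℕ, 1 ≤ n₀ ∧ ∀ t ∈ Icc (0:ℝ) T, iterJ ρ g n₀ t < 1 := by
  obtain ⟨hρ0, hρ1⟩ := hρ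
  have hinv1 : 1 < 1 / ρ := by rw [lt_div_iff₀ hρ0]; linarith
  -- choose a finite exponent r
  obtain ⟨r, hr_gt, hgr⟩ : ∃ r : ℝ, 1 / ρ < r ∧
      MemLp g (ENNReal.ofReal r) (volume.restrict (Icc (0:ℝ) T)) := by
    rcases eq_or_ne q ⊤ with hq' | hq'
    · refine ⟨1 / ρ + 1, by linarith, ?_⟩
      haveI : IsFiniteMeasure (volume.restrict (Icc (0:ℝ) T)) :=
        ⟨by rw [Measure.restrict_apply_univ]; exact measure_Icc_lt_top⟩
      exact hg.mono_exponent (by simp [hq'])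
    · refine ⟨q.toReal, ?_, ?_⟩
      · have := (ENNReal.toReal_lt_toReal ENNReal.ofReal_ne_top hq').mpr hq
        rwa [ENNReal.toReal_ofReal (by positivity)] at this
      · rw [ENNReal.ofReal_toReal hq']; exact hg
  have hr1 : 1 < r := hinv1.trans hr_gt
  have hr0 : 0 < r := by linarith
  set p : ℝ := Real.conjExponent r with hp_def
  have hpq : p.HolderConjugate r := (Real.HolderConjugate.conjExponent hr1).symm
  have hp1 : 1 < p := hpq.lt
  have hp0 : 0 < p := hpq.pos
  set σ : ℝ := ρ - 1 / r with hσ_def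
  have hσ0 : 0 < σ := by
    have h1 : 1 / r < ρ := by
      rw [div_lt_iff₀ hr0]
      have := (div_lt_iff₀ hρ0).mp hr_gt
      nlinarith
    simpa [hσ_def] using sub_pos.mpr h1
  set m : ℝ := σ * p with hm_def
  have hm0 : 0 < m := mul_pos hσ0 hp0
  have hpr : p / r = p - 1 := hpq.div_conj_eq_sub_one
  have hkey : (ρ - 1) * p = m - 1 := by
    have : p / r = p * (1 / r) := by ring
    rw [this] at hpr
    rw [hm_def, hσ_def]
    nlinarith
  have hB : -1 < (ρ - 1) * p := by rw [hkey]; linarith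
  have hΓ : 0 < Real.Gamma ρ := Real.Gamma_pos_of_pos hρ0
  -- the L^r norm of g
  set G : ℝ := (∫ s in Icc (0:ℝ) T, |g s| ^ r) ^ (1 / r) with hG_def
  have hgint : Integrable (fun s => |g s| ^ r) (volume.restrict (Icc (0:ℝ) T)) := by
    have := hgr.integrable_norm_rpow (by simp [hr0]) ENNReal.ofReal_ne_top
    simpa [Real.norm_eq_abs, ENNReal.toReal_ofReal hr0.le] using this
  have hG0 : 0 ≤ G := by
    apply Real.rpow_nonneg
    apply integral_nonneg
    intro s
    positivity
  -- the beta integrals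
  set I : ℝ → ℝ := fun c => ∫ u in (0:ℝ)..1, u ^ c * (1 - u) ^ ((ρ - 1) * p) with hI_def
  have hI0 : ∀ c, 0 ≤ I c := by
    intro c
    apply intervalIntegral.integral_nonneg zero_le_one
    intro u hu
    exact mul_nonneg (Real.rpow_nonneg hu.1 _)
      (Real.rpow_nonneg (by linarith [hu.2]) _)
  set a : ℕ → ℝ := fun k => (Real.Gamma ρ)⁻¹ * G * (I ((k : ℝ) * m)) ^ (1 / p) with ha_def
  have ha0 : ∀ k, 0 ≤ a k := by
    intro k
    have := hI0 ((k : ℝ) * m)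
    have := hΓ
    positivity
  set C : ℕ → ℝ := fun n => ∏ k ∈ Finset.range n, a k with hC_def
  have hC0 : ∀ n, 0 ≤ C n := fun n => Finset.prod_nonneg fun k _ => ha0 k
  -- main induction
  have main : ∀ k : ℕ, ∀ t ∈ Icc (0:ℝ) T,
      0 ≤ iterJ ρ g k t ∧ iterJ ρ g k t ≤ C k * t ^ ((k : ℝ) * σ) := by
    intro k
    induction k with
    | zero =>
      intro t ht
      simp [iterJ, hC_def]
    | succ k ih =>
      intro t ht
      have ht0 : 0 ≤ t := ht.1
      have htT : t ≤ T := ht.2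
      have hCsucc : C (k + 1) = C k * a k := Finset.prod_range_succ a k
      have hval : iterJ ρ g (k + 1) t
          = (Real.Gamma ρ)⁻¹ * ∫ s in (0:ℝ)..t, (t - s) ^ (ρ - 1) * (g s * iterJ ρ g k s) := by
        simp [iterJ, rlInt, smul_eq_mul]
      rcases eq_or_lt_of_le ht0 with h0 | h0
      · have hz : iterJ ρ g (k + 1) t = 0 := by rw [hval, ← h0]; simp
        rw [hz]
        exact ⟨le_refl 0, mul_nonneg (hC0 _) (Real.rpow_nonneg ht0 _)⟩
      · set μt := volume.restrict (Ioc (0:ℝ) t) with hμt_def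
        have hsub : Ioc (0:ℝ) t ⊆ Icc (0:ℝ) T := fun s hs => ⟨hs.1.le, hs.2.trans htT⟩
        have hg0' : ∀ᵐ s ∂μt, 0 ≤ g s := ae_restrict_of_ae_restrict_of_subset hsub hg0
        have hmem : ∀ᵐ s ∂μt, s ∈ Ioc (0:ℝ) t := ae_restrict_mem measurableSet_Ioc
        set f : ℝ → ℝ := fun s => (t - s) ^ (ρ - 1) * (g s * iterJ ρ g k s) with hf_def
        set ψ : ℝ → ℝ := fun s => s ^ ((k : ℝ) * σ) * (t - s) ^ (ρ - 1) with hψ_def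
        have hψ_nonneg : ∀ s ∈ Ioc (0:ℝ) t, 0 ≤ ψ s := by
          intro s hs
          exact mul_nonneg (Real.rpow_nonneg hs.1.le _)
            (Real.rpow_nonneg (by linarith [hs.2]) _)
        have hψpow : ∀ s ∈ Ioc (0:ℝ) t, ψ s ^ p = s ^ ((k : ℝ) * m) * (t - s) ^ ((ρ - 1) * p) := by
          intro s hs
          have hs0 : (0:ℝ) ≤ s := hs.1.le
          have hts : (0:ℝ) ≤ t - s := by linarith [hs.2]
          rw [hψ_def]
          simp only []
          rw [Real.mul_rpow (Real.rpow_nonneg hs0 _) (Real.rpow_nonneg hts _),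
            ← Real.rpow_mul hs0, ← Real.rpow_mul hts, hm_def]
          ring_nf
        have hf_nonneg : ∀ᵐ s ∂μt, 0 ≤ f s := by
          filter_upwards [hg0', hmem] with s hgs hs
          have h1 : (0:ℝ) ≤ (t - s) ^ (ρ - 1) := Real.rpow_nonneg (by linarith [hs.2]) _
          exact mul_nonneg h1 (mul_nonneg hgs (ih s (hsub hs)).1)
        have hf_le : ∀ᵐ s ∂μt, f s ≤ C k * (ψ s * g s) := by
          filter_upwards [hg0', hmem] with s hgs hs
          have h1 : (0:ℝ) ≤ (t - s) ^ (ρ - 1) := Real.rpow_nonneg (by linarith [hs.2]) _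
          calc f s = ((t - s) ^ (ρ - 1) * g s) * iterJ ρ g k s := by
                simp only [hf_def]; ring
            _ ≤ ((t - s) ^ (ρ - 1) * g s) * (C k * s ^ ((k : ℝ) * σ)) :=
              mul_le_mul_of_nonneg_left (ih s (hsub hs)).2 (mul_nonneg h1 hgs)
            _ = C k * (ψ s * g s) := by rw [hψ_def]; ring
        have hkm0 : (0:ℝ) ≤ (k : ℝ) * m := by positivity
        have hscaled : IntervalIntegrable
            (fun s : ℝ => s ^ ((k : ℝ) * m) * (t - s) ^ ((ρ - 1) * p)) volume 0 t :=
          betaAux_intervalIntegrable_scaled (by linarith) hB h0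
        have hψp_int : Integrable (fun s : ℝ => s ^ ((k : ℝ) * m) * (t - s) ^ ((ρ - 1) * p)) μt :=
          (intervalIntegrable_iff_integrableOn_Ioc_of_le h0.le).mp hscaled
        have hψ_meas : AEStronglyMeasurable ψ μt := by
          apply Measurable.aestronglyMeasurable
          rw [hψ_def]
          fun_prop
        have hp_ne0 : ENNReal.ofReal p ≠ 0 := by
          simp [ENNReal.ofReal_eq_zero, not_le, hp0]
        have hψ_mem : MemLp ψ (ENNReal.ofReal p) μt := by
          have hiff := memLp_norm_rpow_iff (p := ENNReal.ofReal p) (q := ENNReal.ofReal p)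
            hψ_meas hp_ne0 ENNReal.ofReal_ne_top
          rw [ENNReal.div_self hp_ne0 ENNReal.ofReal_ne_top] at hiff
          apply hiff.mp
          rw [memLp_one_iff_integrable]
          apply hψp_int.congr
          filter_upwards [hmem] with s hs
          rw [Real.norm_eq_abs, abs_of_nonneg (hψ_nonneg s hs), ENNReal.toReal_ofReal hp0.le,
            hψpow s hs]
        have hg_mem : MemLp g (ENNReal.ofReal r) μt :=
          hgr.mono_measure (Measure.restrict_mono hsub le_rfl)
        have hψg_int : Integrable (fun s => ψ s * g s) μt := by
          rw [← memLp_one_iff_integrable]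
          have hsum : (1 : ℝ≥0∞) / 1 = 1 / ENNReal.ofReal p + 1 / ENNReal.ofReal r := by
            rw [one_div, one_div, one_div, inv_one]
            exact hpq.inv_add_inv_ennreal.symm
          haveI : ENNReal.HolderTriple (ENNReal.ofReal p) (ENNReal.ofReal r) 1 :=
            ⟨by rw [inv_one]; exact hpq.inv_add_inv_ennreal⟩
          have := hg_mem.smul (φ := ψ) (r := 1) hψ_mem
          exact this
        have hψ_ae_nonneg : 0 ≤ᵐ[μt] ψ := by
          filter_upwards [hmem] with s hs
          exact hψ_nonneg s hs
        have holder := integral_mul_le_Lp_mul_Lq_of_nonneg hpq hψ_ae_nonneg hg0' hψ_mem hg_mem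
        have hAsum : (k : ℝ) * m + (ρ - 1) * p + 1 = ((k : ℝ) + 1) * m := by
          rw [hkey]; ring
        have hψp_val : ∫ s, ψ s ^ p ∂μt = t ^ (((k : ℝ) + 1) * m) * I ((k : ℝ) * m) := by
          have e1 : ∫ s, ψ s ^ p ∂μt
              = ∫ s in Ioc (0:ℝ) t, s ^ ((k : ℝ) * m) * (t - s) ^ ((ρ - 1) * p) := by
            rw [hμt_def]
            exact setIntegral_congr_fun measurableSet_Ioc fun s hs => hψpow s hs
          rw [e1, ← intervalIntegral.integral_of_le h0.le, betaAux_scaling h0, hAsum]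
        have hgr_val : (∫ s, g s ^ r ∂μt) ^ (1 / r) ≤ G := by
          have e2 : ∫ s, g s ^ r ∂μt = ∫ s in Ioc (0:ℝ) t, |g s| ^ r := by
            apply integral_congr_ae
            filter_upwards [hg0'] with s hgs
            rw [abs_of_nonneg hgs]
          rw [e2, hG_def]
          apply Real.rpow_le_rpow (integral_nonneg fun s => by positivity) ?_ (by positivity)
          exact setIntegral_mono_set hgint (Eventually.of_forall fun s => by positivity)
            (HasSubset.Subset.eventuallyLE hsub)
        have hXpos : (0:ℝ) ≤ (∫ s, ψ s ^ p ∂μt) ^ (1 / p) := by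
          rw [hψp_val]
          exact Real.rpow_nonneg (mul_nonneg (Real.rpow_nonneg ht0 _) (hI0 _)) _
        have hXval : (∫ s, ψ s ^ p ∂μt) ^ (1 / p)
            = t ^ (((k : ℝ) + 1) * σ) * (I ((k : ℝ) * m)) ^ (1 / p) := by
          rw [hψp_val, Real.mul_rpow (Real.rpow_nonneg ht0 _) (hI0 _),
            ← Real.rpow_mul ht0]
          congr 2
          rw [hm_def]
          field_simp
        have hint_eq : (∫ s in (0:ℝ)..t, f s) = ∫ s, f s ∂μt :=
          intervalIntegral.integral_of_le h0.le
        have hRHS0 : (0:ℝ) ≤ C k * (t ^ (((k : ℝ) + 1) * σ) * (I ((k : ℝ) * m)) ^ (1 / p) * G) :=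
          mul_nonneg (hC0 k) (mul_nonneg (mul_nonneg (Real.rpow_nonneg ht0 _)
            (Real.rpow_nonneg (hI0 _) _)) hG0)
        have hkeybound : 0 ≤ (∫ s, f s ∂μt) ∧
            (∫ s, f s ∂μt) ≤ C k * (t ^ (((k : ℝ) + 1) * σ) * (I ((k : ℝ) * m)) ^ (1 / p) * G) := by
          by_cases H : Integrable f μt
          · refine ⟨integral_nonneg_of_ae hf_nonneg, ?_⟩
            calc (∫ s, f s ∂μt) ≤ ∫ s, C k * (ψ s * g s) ∂μt :=
                integral_mono_ae H (hψg_int.const_mul _) hf_le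
              _ = C k * ∫ s, ψ s * g s ∂μt := integral_const_mul _ _
              _ ≤ C k * ((∫ s, ψ s ^ p ∂μt) ^ (1 / p) * (∫ s, g s ^ r ∂μt) ^ (1 / r)) :=
                mul_le_mul_of_nonneg_left holder (hC0 k)
              _ ≤ C k * ((∫ s, ψ s ^ p ∂μt) ^ (1 / p) * G) := by
                exact mul_le_mul_of_nonneg_left
                  (mul_le_mul_of_nonneg_left hgr_val hXpos) (hC0 k)
              _ = C k * (t ^ (((k : ℝ) + 1) * σ) * (I ((k : ℝ) * m)) ^ (1 / p) * G) := by
                rw [hXval]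
          · rw [integral_undef H]
            exact ⟨le_refl 0, hRHS0⟩
        constructor
        · rw [hval, hint_eq]
          exact mul_nonneg (inv_nonneg.mpr hΓ.le) hkeybound.1
        · rw [hval, hint_eq]
          calc (Real.Gamma ρ)⁻¹ * ∫ s, f s ∂μt
              ≤ (Real.Gamma ρ)⁻¹ * (C k * (t ^ (((k : ℝ) + 1) * σ) * (I ((k : ℝ) * m)) ^ (1 / p) * G)) :=
              mul_le_mul_of_nonneg_left hkeybound.2 (inv_nonneg.mpr hΓ.le)
            _ = C (k + 1) * t ^ (((k + 1 : ℕ) : ℝ) * σ) := by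
              rw [hCsucc, ha_def]
              push_cast
              ring
  -- final part
  have hIt : Tendsto (fun k : ℕ => I ((k : ℝ) * m)) atTop (𝓝 0) := by
    simp only [hI_def]
    exact betaAux_tendsto_zero hB hm0
  have hd : Tendsto (fun k : ℕ => a k * T ^ σ) atTop (𝓝 0) := by
    have hcont : ContinuousAt (fun x : ℝ => (Real.Gamma ρ)⁻¹ * G * x ^ (1 / p) * T ^ σ) 0 := by
      have h1 : ContinuousAt (fun x : ℝ => x ^ (1 / p)) 0 :=
        Real.continuousAt_rpow_const 0 (1 / p) (Or.inr (by positivity))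
      exact ((continuousAt_const.mul h1).mul continuousAt_const)
    have hcomp := hcont.tendsto.comp hIt
    have hz : (Real.Gamma ρ)⁻¹ * G * (0:ℝ) ^ (1 / p) * T ^ σ = 0 := by
      rw [Real.zero_rpow (by positivity : (0:ℝ) < 1 / p).ne']
      ring
    rw [hz] at hcomp
    convert hcomp using 2 with k
    rfl
  have hhalf : ∀ᶠ k : ℕ in atTop, a k * T ^ σ < 1 / 2 := hd.eventually_lt_const (by norm_num)
  obtain ⟨k₀, hk₀⟩ := eventually_atTop.mp hhalf
  set d : ℕ → ℝ := fun k => a k * T ^ σ with hd_def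
  have hd0 : ∀ k, 0 ≤ d k := fun k => mul_nonneg (ha0 k) (Real.rpow_nonneg hT.le _)
  set P : ℝ := ∏ k ∈ Finset.range k₀, d k with hP_def
  have hP0 : 0 ≤ P := Finset.prod_nonneg fun k _ => hd0 k
  obtain ⟨j, hj⟩ := exists_pow_lt_of_lt_one
    (show (0:ℝ) < 1 / (P + 1) by positivity) (by norm_num : (1:ℝ) / 2 < 1)
  set n : ℕ := k₀ + (j + 1) with hn_def
  refine ⟨n, by omega, ?_⟩
  intro t ht
  have hb := (main n t ht).2
  have hprodlt : (∏ k ∈ Finset.range n, d k) < 1 := by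
    rw [hn_def, Finset.prod_range_add]
    have h2 : (∏ i ∈ Finset.range (j + 1), d (k₀ + i)) ≤ (1 / 2 : ℝ) ^ (j + 1) := by
      calc (∏ i ∈ Finset.range (j + 1), d (k₀ + i)) ≤ ∏ _i ∈ Finset.range (j + 1), (1/2 : ℝ) :=
          Finset.prod_le_prod (fun i _ => hd0 _) (fun i _ => (hk₀ (k₀ + i) (by omega)).le)
        _ = (1 / 2 : ℝ) ^ (j + 1) := by simp
    have hple : (∏ k ∈ Finset.range k₀, d k) * (∏ i ∈ Finset.range (j + 1), d (k₀ + i))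
        ≤ P * (1 / 2 : ℝ) ^ (j + 1) := by
      rw [← hP_def]
      exact mul_le_mul_of_nonneg_left h2 hP0
    have hjpos : (0:ℝ) < (1 / 2 : ℝ) ^ j := by positivity
    have hfin : P * (1 / 2 : ℝ) ^ (j + 1) < 1 := by
      have hj' : (P + 1) * (1 / 2 : ℝ) ^ j < 1 := by
        rw [div_eq_mul_inv] at hj  -- hj : (1/2)^j < 1/(P+1)
        have hP1 : (0:ℝ) < P + 1 := by linarith
        calc (P + 1) * (1 / 2 : ℝ) ^ j < (P + 1) * (1 / (P + 1)) :=
            mul_lt_mul_of_pos_left (by simpa [div_eq_mul_inv] using hj) hP1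
          _ = 1 := by field_simp
      have : P * (1 / 2 : ℝ) ^ (j + 1) ≤ (P + 1) * (1 / 2 : ℝ) ^ j := by
        rw [pow_succ]
        nlinarith [hjpos]
      linarith
    linarith [hple, hfin]
  have ht0 : 0 ≤ t := ht.1
  have hTn : t ^ ((n : ℝ) * σ) ≤ T ^ ((n : ℝ) * σ) :=
    Real.rpow_le_rpow ht0 ht.2 (by positivity)
  have hCn : C n * t ^ ((n : ℝ) * σ) ≤ ∏ k ∈ Finset.range n, d k := by
    have hTpow : T ^ ((n : ℝ) * σ) = (T ^ σ) ^ n := by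
      rw [mul_comm, Real.rpow_mul hT.le, Real.rpow_natCast]
    calc C n * t ^ ((n : ℝ) * σ) ≤ C n * T ^ ((n : ℝ) * σ) :=
        mul_le_mul_of_nonneg_left hTn (hC0 n)
      _ = ∏ k ∈ Finset.range n, d k := by
        rw [hTpow]
        have hsplit : (∏ k ∈ Finset.range n, d k)
            = (∏ k ∈ Finset.range n, a k) * ((T ^ σ) ^ n) := by
          rw [hd_def]
          simp only []
          rw [Finset.prod_mul_distrib, Finset.prod_const, Finset.card_range]
        rw [hsplit, hC_def]
  exact lt_of_le_of_lt (hb.trans hCn) hprodlt
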